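/- Let d ≥ 2 be an integer, c_0 > 0, s > 0, t > 0, y ∈ ℝ^d and a, b ∈ ℝ. Then ∫_{ℝ^{d−1}} ∫_{ℝ^{d−1}} √s · (∏_{j=2}^d e^{−c_0 (v_j − y_j)²/s} / √s) · (e^{−c_0 (u_1 − a)²/t} / √t) · (e^{−c_0 (b − v_2)²/t} / √t) · (∏_{j=3}^d e^{−c_0 (u_j − v_j)²/t} / √t) dv_2 … dv_d du_1 du_3 … du_d ≤ (π/c_0)^{d−1}, and the bound is uniform over y ∈ ℝ^d, a, b ∈ ℝ and s, t > 0. -/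

import Mathlib

open MeasureTheory Finset

lemma gauss_val (c0 t μ : ℝ) (hc0 : 0 < c0) (ht : 0 < t) :
    ∫ x : ℝ, Real.exp (-c0 * (x - μ) ^ 2 / t) / Real.sqrt t = Real.sqrt (Real.pi / c0) := by
  have h1 : ∀ x : ℝ, -c0 * (x - μ) ^ 2 / t = -(c0 / t) * (x - μ) ^ 2 := by
    intro x; field_simp
  simp_rw [h1, integral_div]
  rw [integral_sub_right_eq_self (fun x : ℝ => Real.exp (-(c0 / t) * x ^ 2)) μ,
    integral_gaussian]
  rw [div_div_eq_mul_div, ← Real.sqrt_div (by positivity)]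
  congr 1
  field_simp

lemma gauss_integrable (c0 t μ : ℝ) (hc0 : 0 < c0) (ht : 0 < t) :
    Integrable (fun x : ℝ => Real.exp (-c0 * (x - μ) ^ 2 / t) / Real.sqrt t) := by
  have h1 : ∀ x : ℝ, -c0 * (x - μ) ^ 2 / t = -(c0 / t) * (x - μ) ^ 2 := by
    intro x; field_simp
  simp_rw [h1]
  exact ((integrable_exp_neg_mul_sq (by positivity)).comp_sub_right μ).div_const _

theorem gaussian_two_bandwidth_removal_bound (d : ℕ) (hd : 2 ≤ d)
    (c0 s t : ℝ) (hc0 : 0 < c0) (hs : 0 < s) (ht : 0 < t)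
    (y : Fin d → ℝ) (a b : ℝ) :
    (∫ w : (Fin (d - 1) → ℝ) × (Fin (d - 1) → ℝ),
        Real.sqrt s
          * (∏ i : Fin (d - 1),
              Real.exp (-c0 * (w.1 i - y ⟨i.val + 1, by have := i.isLt; omega⟩) ^ 2 / s)
                / Real.sqrt s)
          * (Real.exp (-c0 * (w.2 ⟨0, by omega⟩ - a) ^ 2 / t) / Real.sqrt t)
          * (Real.exp (-c0 * (b - w.1 ⟨0, by omega⟩) ^ 2 / t) / Real.sqrt t)
          * ∏ i ∈ Finset.univ.filter (fun i : Fin (d - 1) => 1 ≤ i.val),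
              Real.exp (-c0 * (w.2 i - w.1 i) ^ 2 / t) / Real.sqrt t)
      ≤ (Real.pi / c0) ^ (d - 1) := by
  have h0 : 0 < d - 1 := by omega
  set i0 : Fin (d - 1) := ⟨0, h0⟩ with hi0
  set Y : Fin (d - 1) → ℝ := fun i => y ⟨i.val + 1, by have := i.isLt; omega⟩ with hY
  set pc : Fin (d - 1) → ℝ := fun i => if i = i0 then b else Y i with hpc
  set pt : Fin (d - 1) → ℝ := fun i => if i = i0 then t else s with hptdef
  have hpt : ∀ i, 0 < pt i := fun i => by
    by_cases h : i = i0 <;> simp [hptdef, h, ht, hs]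
  set qc : Fin (d - 1) → ℝ := fun i => if i = i0 then a else 0 with hqc
  set P : Fin (d - 1) → ℝ → ℝ :=
    fun i x => Real.exp (-c0 * (x - pc i) ^ 2 / pt i) / Real.sqrt (pt i) with hP
  set Q : Fin (d - 1) → ℝ → ℝ :=
    fun i x => Real.exp (-c0 * (x - qc i) ^ 2 / t) / Real.sqrt t with hQ
  set S : (Fin (d - 1) → ℝ) → (Fin (d - 1) → ℝ) :=
    fun v i => if i = i0 then 0 else v i with hS
  have hSm : Measurable S := by
    apply measurable_pi_lambda
    intro i
    by_cases h : i = i0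
    · simp only [hS, if_pos h]; exact measurable_const
    · simp only [hS, if_neg h]; exact measurable_pi_apply i
  set g : ((Fin (d - 1) → ℝ) × (Fin (d - 1) → ℝ)) → ℝ :=
    fun w => (∏ i, P i (w.1 i)) * (∏ i, Q i (w.2 i - S w.1 i)) with hg
  let T : ((Fin (d - 1) → ℝ) × (Fin (d - 1) → ℝ)) ≃ᵐ
      ((Fin (d - 1) → ℝ) × (Fin (d - 1) → ℝ)) :=
    { toFun := fun p => (p.1, p.2 + S p.1)
      invFun := fun p => (p.1, p.2 - S p.1)
      left_inv := fun p => by simp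
      right_inv := fun p => by simp
      measurable_toFun := measurable_fst.prodMk (measurable_snd.add (hSm.comp measurable_fst))
      measurable_invFun := measurable_fst.prodMk (measurable_snd.sub (hSm.comp measurable_fst)) }
  have hT : MeasurePreserving T volume volume := by
    rw [Measure.volume_eq_prod]
    exact (MeasurePreserving.id volume).skew_product (g := fun v u => u + S v)
      (measurable_snd.add (hSm.comp measurable_fst))
      (Filter.Eventually.of_forall fun v => map_add_right_eq_self volume (S v))
  have hg_comp : ∀ w : ((Fin (d - 1) → ℝ) × (Fin (d - 1) → ℝ)),
      g (T w) = (∏ i, P i (w.1 i)) * (∏ i, Q i (w.2 i)) := by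
    intro w
    simp [hg, T]
  have hPint : ∀ i, Integrable (P i) := fun i => gauss_integrable _ _ _ hc0 (hpt i)
  have hQint : ∀ i, Integrable (Q i) := fun i => gauss_integrable _ _ _ hc0 ht
  have hint : Integrable g := by
    rw [← hT.integrable_comp_emb T.measurableEmbedding]
    have heq : (g ∘ T) = fun w : ((Fin (d - 1) → ℝ) × (Fin (d - 1) → ℝ)) =>
        (∏ i, P i (w.1 i)) * (∏ i, Q i (w.2 i)) := funext hg_comp
    rw [heq, Measure.volume_eq_prod]
    exact (Integrable.fintype_prod hPint).mul_prod (Integrable.fintype_prod hQint)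
  have hint_g : ∫ w, g w = (Real.pi / c0) ^ (d - 1) := by
    rw [← hT.integral_comp' g]
    simp_rw [hg_comp]
    rw [Measure.volume_eq_prod,
      integral_prod_mul (f := fun v : Fin (d-1) → ℝ => ∏ i, P i (v i))
        (g := fun u : Fin (d-1) → ℝ => ∏ i, Q i (u i)),
      integral_fintype_prod_volume_eq_prod (f := P), integral_fintype_prod_volume_eq_prod (f := Q)]
    have h1 : ∀ i, ∫ x, P i x = Real.sqrt (Real.pi / c0) :=
      fun i => gauss_val _ _ _ hc0 (hpt i)
    have h2 : ∀ i, ∫ x, Q i x = Real.sqrt (Real.pi / c0) :=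
      fun i => gauss_val _ _ _ hc0 ht
    simp_rw [h1, h2, Finset.prod_const, Finset.card_univ, Fintype.card_fin]
    rw [← mul_pow, Real.mul_self_sqrt (by positivity)]
  have hfilter : Finset.univ.filter (fun i : Fin (d - 1) => 1 ≤ i.val) =
      Finset.univ.erase i0 := by
    ext i
    simp only [Finset.mem_filter, Finset.mem_univ, true_and, Finset.mem_erase, and_true,
      Ne, Fin.ext_iff, hi0, Fin.val_mk]
    omega
  refine le_of_le_of_eq (integral_mono_of_nonneg (Filter.Eventually.of_forall ?_) hint
    (Filter.Eventually.of_forall ?_)) hint_g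
  · intro w
    dsimp only [Pi.zero_apply]
    have h1 : (0:ℝ) ≤ ∏ i : Fin (d-1),
        Real.exp (-c0 * (w.1 i - Y i) ^ 2 / s) / Real.sqrt s :=
      Finset.prod_nonneg fun i _ => by positivity
    have h2 : (0:ℝ) ≤ ∏ i ∈ Finset.univ.filter (fun i : Fin (d - 1) => 1 ≤ i.val),
        Real.exp (-c0 * (w.2 i - w.1 i) ^ 2 / t) / Real.sqrt t :=
      Finset.prod_nonneg fun i _ => by positivity
    have h3 : (0:ℝ) ≤ Real.exp (-c0 * (w.2 i0 - a) ^ 2 / t) / Real.sqrt t := by positivity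
    have h4 : (0:ℝ) ≤ Real.exp (-c0 * (b - w.1 i0) ^ 2 / t) / Real.sqrt t := by positivity
    have h5 : (0:ℝ) ≤ Real.sqrt s := Real.sqrt_nonneg s
    exact mul_nonneg (mul_nonneg (mul_nonneg (mul_nonneg h5 h1) h3) h4) h2
  · intro w
    obtain ⟨v, u⟩ := w
    set A : Fin (d - 1) → ℝ :=
      fun i => Real.exp (-c0 * (v i - Y i) ^ 2 / s) / Real.sqrt s with hA
    set D : Fin (d - 1) → ℝ :=
      fun i => Real.exp (-c0 * (u i - v i) ^ 2 / t) / Real.sqrt t with hD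
    show Real.sqrt s * (∏ i, A i)
        * (Real.exp (-c0 * (u i0 - a) ^ 2 / t) / Real.sqrt t)
        * (Real.exp (-c0 * (b - v i0) ^ 2 / t) / Real.sqrt t)
        * (∏ i ∈ Finset.univ.filter (fun i : Fin (d - 1) => 1 ≤ i.val), D i)
        ≤ (∏ i, P i (v i)) * ∏ i, Q i (u i - S v i)
    rw [hfilter]
    have hPsplit : (∏ i, P i (v i)) =
        P i0 (v i0) * ∏ i ∈ Finset.univ.erase i0, P i (v i) :=
      (Finset.mul_prod_erase _ _ (Finset.mem_univ i0)).symm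
    have hQsplit : (∏ i, Q i (u i - S v i)) =
        Q i0 (u i0 - S v i0) * ∏ i ∈ Finset.univ.erase i0, Q i (u i - S v i) :=
      (Finset.mul_prod_erase _ _ (Finset.mem_univ i0)).symm
    have hAsplit : (∏ i, A i) = A i0 * ∏ i ∈ Finset.univ.erase i0, A i :=
      (Finset.mul_prod_erase _ _ (Finset.mem_univ i0)).symm
    have hPA : ∀ i ∈ Finset.univ.erase i0, P i (v i) = A i := by
      intro i hi
      rw [Finset.mem_erase] at hi
      simp only [hP, hA, hpc, hptdef, if_neg hi.1]
    have hQD : ∀ i ∈ Finset.univ.erase i0, Q i (u i - S v i) = D i := by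
      intro i hi
      rw [Finset.mem_erase] at hi
      simp only [hQ, hD, hqc, hS, if_neg hi.1, sub_zero]
    have hPi0 : P i0 (v i0) = Real.exp (-c0 * (b - v i0) ^ 2 / t) / Real.sqrt t := by
      simp only [hP, hpc, hptdef, if_pos rfl, eq_self_iff_true, if_true]
      congr 2
      ring
    have hQi0 : Q i0 (u i0 - S v i0) =
        Real.exp (-c0 * (u i0 - a) ^ 2 / t) / Real.sqrt t := by
      simp only [hQ, hqc, hS, if_pos rfl, eq_self_iff_true, if_true, sub_zero]
    rw [hPsplit, hQsplit, Finset.prod_congr rfl hPA, Finset.prod_congr rfl hQD,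
      hPi0, hQi0, hAsplit]
    set X := ∏ i ∈ Finset.univ.erase i0, A i with hX
    set D' := ∏ i ∈ Finset.univ.erase i0, D i with hD'
    set B := Real.exp (-c0 * (u i0 - a) ^ 2 / t) / Real.sqrt t with hB
    set C := Real.exp (-c0 * (b - v i0) ^ 2 / t) / Real.sqrt t with hC
    have hXnn : 0 ≤ X := Finset.prod_nonneg fun i _ => by positivity
    have hD'nn : 0 ≤ D' := Finset.prod_nonneg fun i _ => by positivity
    have hBnn : 0 ≤ B := by rw [hB]; positivity
    have hCnn : 0 ≤ C := by rw [hC]; positivity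
    have hE0 : Real.exp (-c0 * (v i0 - Y i0) ^ 2 / s) ≤ 1 := by
      rw [Real.exp_le_one_iff]
      apply div_nonpos_of_nonpos_of_nonneg _ hs.le
      nlinarith [sq_nonneg (v i0 - Y i0)]
    have hsr : Real.sqrt s ≠ 0 := by positivity
    have key : Real.sqrt s * (A i0 * X) * B * C * D'
        = Real.exp (-c0 * (v i0 - Y i0) ^ 2 / s) * (X * B * C * D') := by
      rw [hA]
      field_simp
    calc Real.sqrt s * (A i0 * X) * B * C * D'
        = Real.exp (-c0 * (v i0 - Y i0) ^ 2 / s) * (X * B * C * D') := key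
      _ ≤ 1 * (X * B * C * D') := by
          apply mul_le_mul_of_nonneg_right hE0
          positivity
      _ = C * X * (B * D') := by ring
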